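/- Let 0<α≤1, q>1 and w ∈ A_q. Then there exists a constant C>0, independent of k and f, such that for every locally integrable function f and every integer k ≥ 1, ‖S_{α,2ᵏ}(f)‖_{L²_w} ≤ C·2^{knq/2}·‖S_α(f)‖_{L²_w}. -/

import Mathlib

open MeasureTheory ENNReal Real SchwartzMap FourierTransform

noncomputable section

abbrev Rn (n : ℕ) := EuclideanSpace ℝ (Fin n)

def cube {n : ℕ} (x₀ : Rn n) (r : ℝ) : Set (Rn n) :=
  {x | ∀ i, |x i - x₀ i| ≤ r / 2}

def wVol {n : ℕ} (w : Rn n → ℝ) (E : Set (Rn n)) : ℝ≥0∞ :=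
  ∫⁻ x in E, ENNReal.ofReal (w x)

def IsAqWith {n : ℕ} (w : Rn n → ℝ) (q : ℝ) (C : ℝ) : Prop :=
  (∀ x, 0 ≤ w x) ∧ (∀ᵐ x, 0 < w x) ∧ LocallyIntegrable w volume ∧
    ∀ (x₀ : Rn n) (r : ℝ), 0 < r →
      ((volume (cube x₀ r))⁻¹ * wVol w (cube x₀ r)) *
        ((volume (cube x₀ r))⁻¹ *
          ∫⁻ x in cube x₀ r, ENNReal.ofReal (w x ^ (-(1 : ℝ) / (q - 1)))) ^ (q - 1)
        ≤ ENNReal.ofReal C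

def IsAq {n : ℕ} (w : Rn n → ℝ) (q : ℝ) : Prop :=
  ∃ C : ℝ, 0 < C ∧ IsAqWith w q C

def IsAinfty {n : ℕ} (w : Rn n → ℝ) : Prop :=
  ∃ q : ℝ, 1 < q ∧ IsAq w q

def lpwNorm {n : ℕ} (w : Rn n → ℝ) (p : ℝ) (g : Rn n → ℝ≥0∞) : ℝ≥0∞ :=
  (∫⁻ x, g x ^ p * ENNReal.ofReal (w x)) ^ (1 / p)

def lqwNormF {n : ℕ} (w : Rn n → ℝ) (q : ℝ) (a : Rn n → ℝ) : ℝ≥0∞ :=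
  (∫⁻ x, ENNReal.ofReal (|a x| ^ q) * ENNReal.ofReal (w x)) ^ (1 / q)

/-- A `w`-`(p,q,0)`-atom supported in the cube `Q(x₀, r)`. -/
def IsWAtom {n : ℕ} (w : Rn n → ℝ) (p q : ℝ) (a : Rn n → ℝ) (x₀ : Rn n) (r : ℝ) : Prop :=
  Measurable a ∧ (∀ x, x ∉ cube x₀ r → a x = 0) ∧
    lqwNormF w q a ≤ (wVol w (cube x₀ r)) ^ (1 / q - 1 / p) ∧ (∫ x, a x) = 0

/- Schwartz space / tempered distributions -/

lemma hasTemperateGrowth_affine {n : ℕ} (c : Rn n) (L : Rn n →L[ℝ] Rn n) :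
    Function.HasTemperateGrowth (fun y : Rn n => c + L y) := by
  apply Function.HasTemperateGrowth.of_fderiv (k := 1) (C := ‖c‖ + ‖L‖)
  · have h : fderiv ℝ (fun y : Rn n => c + L y) = fun _ => L := by
      ext1 y
      have : HasFDerivAt (fun y : Rn n => c + L y) (0 + L) y :=
        (hasFDerivAt_const c y).add (L.hasFDerivAt)
      simpa using this.fderiv
    rw [h]
    exact Function.HasTemperateGrowth.const L
  · exact (differentiable_const c).add L.differentiable
  · intro x
    calc ‖c + L x‖ ≤ ‖c‖ + ‖L x‖ := norm_add_le _ _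
      _ ≤ ‖c‖ + ‖L‖ * ‖x‖ := by gcongr; exact L.le_opNorm x
      _ ≤ (‖c‖ + ‖L‖) * (1 + ‖x‖) ^ 1 := by
          rw [pow_one]
          nlinarith [norm_nonneg c, norm_nonneg (L : Rn n →L[ℝ] Rn n), norm_nonneg x]

/-- For `t ≠ 0`, the Schwartz function `y ↦ t^{-n} φ((x - y)/t) = φ_t(x - y)`;
for `t = 0` the junk value `0`. -/
def shiftDilate {n : ℕ} (φ : 𝓢(Rn n, ℝ)) (t : ℝ) (x : Rn n) : 𝓢(Rn n, ℝ) := by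
  classical
  by_cases h : t = 0
  · exact 0
  · refine (t ^ (-(n : ℤ))) • (SchwartzMap.compCLM (𝕜 := ℝ)
      (g := fun y : Rn n => t⁻¹ • (x - y)) ?_ ?_ φ)
    · have : (fun y : Rn n => t⁻¹ • (x - y))
          = fun y : Rn n => (t⁻¹ • x) + ((-t⁻¹) • (ContinuousLinearMap.id ℝ (Rn n))) y := by
        funext y
        simp [smul_sub, sub_eq_add_neg]
      rw [this]
      exact hasTemperateGrowth_affine _ _
    · refine ⟨1, ‖x‖ + |t|, fun y => ?_⟩
      have h1 : ‖x - y‖ = |t| * ‖t⁻¹ • (x - y)‖ := by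
        rw [norm_smul, norm_inv, Real.norm_eq_abs, ← mul_assoc,
          mul_inv_cancel₀ (by simpa using h), one_mul]
      have h0 : y = x - (x - y) := by abel
      calc ‖y‖ = ‖x - (x - y)‖ := by rw [← h0]
        _ ≤ ‖x‖ + ‖x - y‖ := norm_sub_le _ _
        _ = ‖x‖ + |t| * ‖t⁻¹ • (x - y)‖ := by rw [h1]
        _ ≤ (‖x‖ + |t|) * (1 + ‖t⁻¹ • (x - y)‖) ^ 1 := by
            have h2 : (0:ℝ) ≤ ‖t⁻¹ • (x - y)‖ := norm_nonneg _
            have h3 : (0:ℝ) ≤ ‖x‖ := norm_nonneg _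
            have h4 : (0:ℝ) ≤ |t| := abs_nonneg _
            nlinarith

/-- The convolution `f * φ_t (x)` of a tempered distribution `f` with the dilate `φ_t` of a
Schwartz function `φ`. -/
def distConv {n : ℕ} (f : 𝓢(Rn n, ℝ) →L[ℝ] ℝ) (φ : 𝓢(Rn n, ℝ)) (t : ℝ) (x : Rn n) : ℝ :=
  f (shiftDilate φ t x)

/-- The maximal function `M_φ f (x) = sup_{t > 0} |f * φ_t (x)|` of a tempered distribution. -/
def maxFun {n : ℕ} (φ : 𝓢(Rn n, ℝ)) (f : 𝓢(Rn n, ℝ) →L[ℝ] ℝ) (x : Rn n) : ℝ≥0∞ :=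
  ⨆ (t : ℝ) (_ : 0 < t), ENNReal.ofReal |distConv f φ t x|

/-- The norm of `f` in the weighted Hardy space `H^p_w`, defined through the
maximal function `M_φ f`. -/
def hardyNorm {n : ℕ} (w : Rn n → ℝ) (p : ℝ) (φ : 𝓢(Rn n, ℝ))
    (f : 𝓢(Rn n, ℝ) →L[ℝ] ℝ) : ℝ≥0∞ :=
  lpwNorm w p (maxFun φ f)

/-- Membership in the weighted Hardy space `H^p_w`. -/
def MemHp {n : ℕ} (w : Rn n → ℝ) (p : ℝ) (φ : 𝓢(Rn n, ℝ))
    (f : 𝓢(Rn n, ℝ) →L[ℝ] ℝ) : Prop :=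
  hardyNorm w p φ f < ∞

/-- A tempered distribution vanishes weakly at infinity if `f * φ_t → 0` as `t → ∞`
in the sense of distributions. -/
def VanishesWeaklyAtInfinity {n : ℕ} (f : 𝓢(Rn n, ℝ) →L[ℝ] ℝ) : Prop :=
  ∀ φ η : 𝓢(Rn n, ℝ),
    Filter.Tendsto (fun t : ℝ => ∫ x, distConv f φ t x * η x) Filter.atTop (nhds 0)

/- Lipschitz space `Lip(α,1,0)` -/

/-- The average `b_Q` of `b` over `Q`. -/
def cubeAvg {n : ℕ} (b : Rn n → ℝ) (Q : Set (Rn n)) : ℝ :=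
  (volume Q).toReal⁻¹ * ∫ y in Q, b y

/-- The `Lip(α,1,0)` norm `sup_Q |Q|^{-1-α/n} ∫_Q |b - b_Q|`. -/
def lipNorm (n : ℕ) (α : ℝ) (b : Rn n → ℝ) : ℝ≥0∞ :=
  ⨆ (x₀ : Rn n) (r : ℝ) (_ : 0 < r),
    (volume (cube x₀ r)) ^ (-(1 : ℝ) - α / n) *
      ∫⁻ y in cube x₀ r, ENNReal.ofReal |b y - cubeAvg b (cube x₀ r)|

/-- `F` realizes the tempered distribution `f` as an element of the dual of `Lip(α,1,0)`:
it is a linear functional, bounded with respect to the `Lip(α,1,0)` norm,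
which agrees with `f` on Schwartz functions. -/
def IsLipDualExt {n : ℕ} (α : ℝ) (f : 𝓢(Rn n, ℝ) →L[ℝ] ℝ)
    (F : (Rn n → ℝ) →ₗ[ℝ] ℝ) : Prop :=
  (∀ φ : 𝓢(Rn n, ℝ), F (φ : Rn n → ℝ) = f φ) ∧
    ∃ C : ℝ, 0 ≤ C ∧ ∀ b : Rn n → ℝ,
      ENNReal.ofReal |F b| ≤ ENNReal.ofReal C * lipNorm n α b

/- Intrinsic square functions -/

/-- The family `𝒞_α`. -/
def Calpha (n : ℕ) (α : ℝ) : Set (Rn n → ℝ) :=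
  {φ | Function.support φ ⊆ Metric.closedBall 0 1 ∧ (∫ x, φ x) = 0 ∧
    ∀ x x', |φ x - φ x'| ≤ ‖x - x'‖ ^ α}

/-- The family `𝒞_{(α,ε)}`. -/
def CalphaEps (n : ℕ) (α ε : ℝ) : Set (Rn n → ℝ) :=
  {φ | (∀ x, |φ x| ≤ (1 + ‖x‖) ^ (-(n : ℝ) - ε)) ∧
    (∀ x x', |φ x - φ x'| ≤
      ‖x - x'‖ ^ α * ((1 + ‖x‖) ^ (-(n : ℝ) - ε) + (1 + ‖x'‖) ^ (-(n : ℝ) - ε))) ∧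
    (∫ x, φ x) = 0}

/-- The kernel `z ↦ φ_t(y - z) = t^{-n} φ((y-z)/t)`. -/
def dilKer {n : ℕ} (φ : Rn n → ℝ) (t : ℝ) (y : Rn n) : Rn n → ℝ :=
  fun z => t ^ (-(n : ℤ)) * φ (t⁻¹ • (y - z))

/-- `A_α(f)(y,t)` for the functional `F` representing `f` on `Lip(α,1,0)`. -/
def intrA {n : ℕ} (α : ℝ) (F : (Rn n → ℝ) →ₗ[ℝ] ℝ) (y : Rn n) (t : ℝ) : ℝ≥0∞ :=
  ⨆ φ ∈ Calpha n α, ENNReal.ofReal |F (dilKer φ t y)|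

/-- `Ã_{(α,ε)}(f)(y,t)` for the functional `F` representing `f`. -/
def intrAEps {n : ℕ} (α ε : ℝ) (F : (Rn n → ℝ) →ₗ[ℝ] ℝ) (y : Rn n) (t : ℝ) : ℝ≥0∞ :=
  ⨆ φ ∈ CalphaEps n α ε, ENNReal.ofReal |F (dilKer φ t y)|

/-- `A_α(f)(y,t)` for a (locally integrable) function `f`. -/
def intrAf {n : ℕ} (α : ℝ) (f : Rn n → ℝ) (y : Rn n) (t : ℝ) : ℝ≥0∞ :=
  ⨆ φ ∈ Calpha n α, ENNReal.ofReal |∫ z, f z * dilKer φ t y z|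

/-- `Ã_{(α,ε)}(f)(y,t)` for a function `f`. -/
def intrAfEps {n : ℕ} (α ε : ℝ) (f : Rn n → ℝ) (y : Rn n) (t : ℝ) : ℝ≥0∞ :=
  ⨆ φ ∈ CalphaEps n α ε, ENNReal.ofReal |∫ z, f z * dilKer φ t y z|

/-- The `g`-type square function built from a generalized square-function kernel `A(y,t)`:
`x ↦ (∫_0^∞ A(x,t)² dt/t)^{1/2}`. -/
def gSF {n : ℕ} (A : Rn n → ℝ → ℝ≥0∞) (x : Rn n) : ℝ≥0∞ :=
  (∫⁻ t in Set.Ioi (0 : ℝ), (A x t) ^ 2 * (ENNReal.ofReal t)⁻¹) ^ (1 / (2 : ℝ))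

/-- The area-integral type square function of aperture `β`:
`x ↦ (∬_{|x-y| < βt} A(y,t)² dy dt/t^{n+1})^{1/2}`. -/
def sSF (n : ℕ) (β : ℝ) (A : Rn n → ℝ → ℝ≥0∞) (x : Rn n) : ℝ≥0∞ :=
  (∫⁻ t in Set.Ioi (0 : ℝ),
      (∫⁻ y in Metric.ball x (β * t), (A y t) ^ 2) * (ENNReal.ofReal (t ^ (n + 1)))⁻¹) ^
    (1 / (2 : ℝ))

/-- The `g^*_λ`-type square function:
`x ↦ (∬_{ℝ^{n+1}_+} (t/(t+|x-y|))^{λn} A(y,t)² dy dt/t^{n+1})^{1/2}`. -/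
def gStarSF (n : ℕ) (lam : ℝ) (A : Rn n → ℝ → ℝ≥0∞) (x : Rn n) : ℝ≥0∞ :=
  (∫⁻ t in Set.Ioi (0 : ℝ),
      (∫⁻ y, ENNReal.ofReal ((t / (t + ‖x - y‖)) ^ (lam * n)) * (A y t) ^ 2) *
        (ENNReal.ofReal (t ^ (n + 1)))⁻¹) ^ (1 / (2 : ℝ))

/-- The weighted maximal function `M_w`. -/
def wMaximal {n : ℕ} (w : Rn n → ℝ) (f : Rn n → ℝ) (x : Rn n) : ℝ≥0∞ :=
  ⨆ (x₀ : Rn n) (r : ℝ) (_ : 0 < r) (_ : x ∈ cube x₀ r),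
    (wVol w (cube x₀ r))⁻¹ * ∫⁻ y in cube x₀ r, ENNReal.ofReal |f y| * ENNReal.ofReal (w y)




section AuxLemmas

lemma coord_abs_le_norm {n : ℕ} (x : Rn n) (i : Fin n) : |x i| ≤ ‖x‖ := by
  rw [EuclideanSpace.norm_eq]
  simp_rw [Real.norm_eq_abs, sq_abs]
  rw [← Real.sqrt_sq_eq_abs]
  apply Real.sqrt_le_sqrt
  exact Finset.single_le_sum (f := fun j => x j ^ 2) (fun j _ => sq_nonneg _) (Finset.mem_univ i)

lemma cube_mono {n : ℕ} (x₀ : Rn n) {r r' : ℝ} (h : r ≤ r') : cube x₀ r ⊆ cube x₀ r' := by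
  intro x hx i
  exact (hx i).trans (by linarith)

lemma ball_subset_cube {n : ℕ} (y : Rn n) (s : ℝ) :
    Metric.ball y s ⊆ cube y (2 * s) := by
  intro x hx i
  have h1 : |(x - y) i| ≤ ‖x - y‖ := coord_abs_le_norm _ i
  have h2 : ‖x - y‖ < s := by
    rw [← dist_eq_norm]; exact hx
  have : (x - y) i = x i - y i := by simp
  rw [this] at h1
  linarith

lemma cube_subset_ball {n : ℕ} (hn : 0 < n) (y : Rn n) {t : ℝ} (ht : 0 < t) :
    cube y (t / Real.sqrt n) ⊆ Metric.ball y t := by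
  intro x hx
  have hsn : (1:ℝ) ≤ Real.sqrt n := by
    rw [show (1:ℝ) = Real.sqrt 1 by simp]
    apply Real.sqrt_le_sqrt
    exact_mod_cast hn
  have hsn0 : (0:ℝ) < Real.sqrt n := by linarith
  rw [Metric.mem_ball, dist_eq_norm, EuclideanSpace.norm_eq]
  simp_rw [Real.norm_eq_abs, sq_abs]
  have hb : ∀ i, ((x - y) i) ^ 2 ≤ (t / Real.sqrt n / 2) ^ 2 := by
    intro i
    have := hx i
    have hxy : (x - y) i = x i - y i := by simp
    rw [hxy]
    have h2 : |x i - y i| ≤ t / Real.sqrt n / 2 := this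
    nlinarith [abs_nonneg (x i - y i), sq_abs (x i - y i)]
  calc Real.sqrt (∑ i, ((x - y) i) ^ 2) ≤ Real.sqrt (n * (t / Real.sqrt n / 2) ^ 2) := by
        apply Real.sqrt_le_sqrt
        calc (∑ i, ((x - y) i) ^ 2) ≤ ∑ _i : Fin n, (t / Real.sqrt n / 2) ^ 2 :=
              Finset.sum_le_sum (fun i _ => hb i)
          _ = n * (t / Real.sqrt n / 2) ^ 2 := by simp [mul_comm]
    _ < t := by
        have hs : Real.sqrt n ^ 2 = (n:ℝ) := Real.sq_sqrt (by positivity)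
        have h2 : (n:ℝ) * (t / Real.sqrt n / 2) ^ 2 = (t/2)^2 := by
          field_simp; nlinarith [hs]
        rw [h2, Real.sqrt_sq (by positivity)]
        linarith

lemma measurableSet_cube {n : ℕ} (x₀ : Rn n) (r : ℝ) : MeasurableSet (cube x₀ r) := by
  have : cube x₀ r = ⋂ i, {x : Rn n | |x i - x₀ i| ≤ r / 2} := by
    ext x; simp [cube, Set.mem_iInter]
  rw [this]
  apply MeasurableSet.iInter
  intro i
  have : Continuous fun x : Rn n => |x i - x₀ i| :=
    (continuous_apply i |>.comp (PiLp.continuous_ofLp 2 _ )).sub continuous_const |>.abs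
  exact (isClosed_le this continuous_const).measurableSet

lemma volume_cube {n : ℕ} (x₀ : Rn n) {r : ℝ} (hr : 0 ≤ r) :
    volume (cube x₀ r) = ENNReal.ofReal (r ^ n) := by
  have heq : cube x₀ r =
      (MeasurableEquiv.toLp 2 (Fin n → ℝ)).symm ⁻¹'
        (Set.univ.pi fun i => Set.Icc (x₀ i - r / 2) (x₀ i + r / 2)) := by
    ext x
    simp only [cube, Set.mem_setOf_eq, Set.mem_preimage, Set.mem_pi, Set.mem_univ, true_implies,
      Set.mem_Icc]
    constructor
    · intro h i
      have := h i
      rw [abs_sub_le_iff] at this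
      constructor <;> [skip; skip] <;> dsimp [MeasurableEquiv.coe_toLp_symm] <;> linarith [this.1, this.2]
    · intro h i
      rw [abs_sub_le_iff]
      have := h i
      dsimp [MeasurableEquiv.coe_toLp_symm] at this
      constructor <;> linarith [this.1, this.2]
  rw [heq, (EuclideanSpace.volume_preserving_symm_measurableEquiv_toLp (Fin n)).measure_preimage
    (MeasurableSet.univ_pi (fun i => measurableSet_Icc)).nullMeasurableSet]
  rw [volume_pi_pi]
  simp only [Real.volume_Icc]
  have : ∀ i : Fin n, ENNReal.ofReal (x₀ i + r / 2 - (x₀ i - r / 2)) = ENNReal.ofReal r := by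
    intro i; congr 1; ring
  rw [Finset.prod_congr rfl (fun i _ => this i), Finset.prod_const, ENNReal.ofReal_pow hr]
  simp




variable {n : ℕ} {α : ℝ}

lemma Calpha.continuous (hα0 : 0 < α) {φ : Rn n → ℝ} (hφ : φ ∈ Calpha n α) :
    Continuous φ := by
  rw [continuous_iff_continuousAt]
  intro x
  rw [ContinuousAt, tendsto_iff_dist_tendsto_zero]
  have hb : ∀ x' : Rn n, dist (φ x') (φ x) ≤ ‖x' - x‖ ^ α := by
    intro x'
    rw [Real.dist_eq]
    exact hφ.2.2 x' x
  apply squeeze_zero (fun x' => dist_nonneg) hb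
  have h1 : Filter.Tendsto (fun x' : Rn n => ‖x' - x‖) (nhds x) (nhds 0) := by
    have := (continuous_id.sub (continuous_const (y := x))).norm.tendsto x
    simpa using this
  have h2 : Filter.Tendsto (fun s : ℝ => s ^ α) (nhds 0) (nhds 0) := by
    have := (Real.continuousAt_rpow_const 0 α (Or.inr hα0.le)).tendsto
    simpa [Real.zero_rpow (ne_of_gt hα0)] using this
  exact h2.comp h1

lemma Calpha.abs_le (hn : 0 < n) (hα0 : 0 < α) (hα1 : α ≤ 1) {φ : Rn n → ℝ}
    (hφ : φ ∈ Calpha n α) (x : Rn n) : |φ x| ≤ 4 := by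
  by_cases hx : ‖x‖ ≤ 1
  · set v : Rn n := EuclideanSpace.single ⟨0, hn⟩ (3 : ℝ) with hv
    have hnv : ‖v‖ = 3 := by
      rw [hv, EuclideanSpace.norm_single]; norm_num
    have hout : φ (x + v) = 0 := by
      by_contra h
      have h1 : x + v ∈ Metric.closedBall (0 : Rn n) 1 := hφ.1 (Function.mem_support.mpr h)
      rw [Metric.mem_closedBall, dist_zero_right] at h1
      have h4 : ‖v‖ ≤ ‖x + v‖ + ‖x‖ := by
        calc ‖v‖ = ‖(x + v) - x‖ := by congr 1; abel
          _ ≤ ‖x + v‖ + ‖x‖ := norm_sub_le _ _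
      rw [hnv] at h4
      linarith
    have h3 : |φ x| = |φ x - φ (x + v)| := by rw [hout, sub_zero]
    rw [h3]
    calc |φ x - φ (x + v)| ≤ ‖x - (x + v)‖ ^ α := hφ.2.2 x (x + v)
      _ = 3 ^ α := by
          have h5 : x - (x + v) = -v := by abel
          rw [h5, norm_neg, hnv]
      _ ≤ 3 ^ (1:ℝ) := Real.rpow_le_rpow_of_exponent_le (by norm_num) hα1
      _ ≤ 4 := by rw [Real.rpow_one]; norm_num
  · have h6 : φ x = 0 := by
      by_contra h
      have := hφ.1 (Function.mem_support.mpr h)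
      rw [Metric.mem_closedBall, dist_zero_right] at this
      linarith
    rw [h6]; norm_num

lemma dilKer_zero (hn : 0 < n) (φ : Rn n → ℝ) (y z : Rn n) : dilKer φ 0 y z = 0 := by
  unfold dilKer
  rw [zero_zpow]
  · ring
  · simp; omega

lemma dilKer_eq_zero_of_far {φ : Rn n → ℝ} (hφ : Function.support φ ⊆ Metric.closedBall 0 1)
    {t : ℝ} (ht : t ≠ 0) {y z : Rn n} (h : |t| < ‖y - z‖) : dilKer φ t y z = 0 := by
  unfold dilKer
  have h1 : φ (t⁻¹ • (y - z)) = 0 := by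
    by_contra hc
    have h2 := hφ (Function.mem_support.mpr hc)
    rw [Metric.mem_closedBall, dist_zero_right, norm_smul, norm_inv, Real.norm_eq_abs] at h2
    have h0 : 0 < |t| := abs_pos.mpr ht
    rw [inv_mul_le_iff₀ h0, mul_one] at h2
    linarith
  rw [h1]; ring

lemma conv_continuousAt (hn : 0 < n) (hα0 : 0 < α) (hα1 : α ≤ 1) {f : Rn n → ℝ}
    (hf : LocallyIntegrable f volume) {φ : Rn n → ℝ} (hφ : φ ∈ Calpha n α)
    {y₀ : Rn n} {t₀ : ℝ} (h0 : t₀ ≠ 0) :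
    ContinuousAt (fun q : Rn n × ℝ => ∫ z, f z * dilKer φ q.2 q.1 z) (y₀, t₀) := by
  have ht₀ : 0 < |t₀| := abs_pos.mpr h0
  set K := Metric.closedBall y₀ (1 + 2 * |t₀|) with hKdef
  have hK : IsCompact K := isCompact_closedBall _ _
  have hKm : MeasurableSet K := Metric.isClosed_closedBall.measurableSet
  apply continuousAt_of_dominated
    (bound := K.indicator (fun z => (|t₀| / 2) ^ (-(n:ℤ)) * 4 * |f z|))
  · filter_upwards with q
    apply (hf.aestronglyMeasurable).mul
    rcases eq_or_ne q.2 0 with hq | hq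
    · have h7 : dilKer φ q.2 q.1 = fun _ => 0 := by
        funext z; rw [hq]; exact dilKer_zero hn φ _ _
      rw [h7]
      exact aestronglyMeasurable_const
    · apply Continuous.aestronglyMeasurable
      unfold dilKer
      exact continuous_const.mul ((Calpha.continuous hα0 hφ).comp
        ((continuous_const.sub continuous_id).fun_const_smul _))
  · have hU : {q : Rn n × ℝ | ‖q.1 - y₀‖ < 1 ∧ |t₀|/2 < |q.2| ∧ |q.2| < 2*|t₀|} ∈
        nhds (y₀, t₀) := by
      apply IsOpen.mem_nhds
      · exact (isOpen_lt ((continuous_fst.sub continuous_const).norm) continuous_const).and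
          ((isOpen_lt continuous_const continuous_snd.abs).and
            (isOpen_lt continuous_snd.abs continuous_const))
      · refine ⟨by simp, by linarith, by linarith⟩
    filter_upwards [hU] with q hq
    filter_upwards with z
    obtain ⟨hq1, hq2, hq3⟩ := hq
    have hq0 : q.2 ≠ 0 := by
      intro h; rw [h] at hq2; simp at hq2; linarith
    rw [Real.norm_eq_abs]
    by_cases hz : |q.2| < ‖q.1 - z‖
    · rw [dilKer_eq_zero_of_far hφ.1 hq0 hz]
      simp only [mul_zero, abs_zero]
      apply Set.indicator_nonneg
      intro a _
      positivity
    · push_neg at hz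
      have hzK : z ∈ K := by
        rw [hKdef, Metric.mem_closedBall, dist_comm, dist_eq_norm]
        calc ‖y₀ - z‖ = ‖(y₀ - q.1) + (q.1 - z)‖ := by congr 1; abel
          _ ≤ ‖y₀ - q.1‖ + ‖q.1 - z‖ := norm_add_le _ _
          _ ≤ 1 + 2*|t₀| := by
              have h1 : ‖y₀ - q.1‖ = ‖q.1 - y₀‖ := norm_sub_rev _ _
              rw [h1]
              have := hz.trans hq3.le
              linarith
      rw [Set.indicator_of_mem hzK]
      have hd : |dilKer φ q.2 q.1 z| ≤ (|t₀| / 2) ^ (-(n:ℤ)) * 4 := by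
        unfold dilKer
        rw [abs_mul]
        have h1 : |(q.2 : ℝ) ^ (-(n:ℤ))| ≤ (|t₀| / 2) ^ (-(n:ℤ)) := by
          have habs : |(q.2 : ℝ) ^ (-(n:ℤ))| = |q.2| ^ (-(n:ℤ)) := by
            rw [zpow_neg, zpow_neg, abs_inv, zpow_natCast, zpow_natCast, abs_pow]
          rw [habs, zpow_neg, zpow_neg, zpow_natCast, zpow_natCast]
          apply inv_anti₀
          · positivity
          · exact pow_le_pow_left₀ (by positivity) hq2.le n
        have h2 : |φ (q.2⁻¹ • (q.1 - z))| ≤ 4 := Calpha.abs_le hn hα0 hα1 hφ _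
        exact mul_le_mul h1 h2 (abs_nonneg _) (by positivity)
      calc |f z * dilKer φ q.2 q.1 z| = |f z| * |dilKer φ q.2 q.1 z| := abs_mul _ _
        _ ≤ |f z| * ((|t₀| / 2) ^ (-(n:ℤ)) * 4) :=
            mul_le_mul_of_nonneg_left hd (abs_nonneg _)
        _ = (|t₀| / 2) ^ (-(n:ℤ)) * 4 * |f z| := by ring
  · rw [integrable_indicator_iff hKm]
    exact ((hf.integrableOn_isCompact hK).norm.const_mul _)
  · filter_upwards with z
    apply ContinuousAt.mul continuousAt_const
    unfold dilKer
    apply ContinuousAt.mul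
    · exact ContinuousAt.comp (f := Prod.snd) (x := (y₀, t₀)) (continuousAt_zpow₀ t₀ (-(n:ℤ)) (Or.inl h0)) continuousAt_snd
    · apply ((Calpha.continuous hα0 hφ).continuousAt).comp
      apply ContinuousAt.fun_smul
      · exact (continuousAt_inv₀ h0).comp continuousAt_snd
      · exact (continuousAt_fst).sub continuousAt_const

lemma intrAf_measurable (hn : 0 < n) (hα0 : 0 < α) (hα1 : α ≤ 1) {f : Rn n → ℝ}
    (hf : LocallyIntegrable f volume) :
    Measurable (fun p : Rn n × ℝ => intrAf α f p.1 p.2) := by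
  have key : ∀ φ ∈ Calpha n α, LowerSemicontinuous
      (fun p : Rn n × ℝ => ENNReal.ofReal |∫ z, f z * dilKer φ p.2 p.1 z|) := by
    intro φ hφ p c hc
    dsimp only at hc
    rcases eq_or_ne p.2 0 with h0 | h0
    · exfalso
      have hz : (∫ z, f z * dilKer φ p.2 p.1 z) = 0 := by
        rw [h0]
        simp [dilKer_zero hn φ]
      rw [hz] at hc
      simp at hc
    · have hcont : ContinuousAt
          (fun p : Rn n × ℝ => ENNReal.ofReal |∫ z, f z * dilKer φ p.2 p.1 z|) p := by
        exact (ENNReal.continuous_ofReal.continuousAt).comp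
          ((conv_continuousAt hn hα0 hα1 hf hφ h0).abs)
      exact hcont (Ioi_mem_nhds hc)
  have hrw : (fun p : Rn n × ℝ => intrAf α f p.1 p.2) =
      fun p => ⨆ φ : Calpha n α,
        ENNReal.ofReal |∫ z, f z * dilKer (φ : Rn n → ℝ) p.2 p.1 z| := by
    funext p
    rw [intrAf, iSup_subtype']
  rw [hrw]
  apply LowerSemicontinuous.measurable
  apply lowerSemicontinuous_iSup
  intro φ
  exact key φ φ.2

end AuxLemmas


section Aux2
variable {n : ℕ} {q C : ℝ} {w : Rn n → ℝ}

lemma aq_sub (hn : 0 < n) (hq : 1 < q) (hw : IsAqWith w q C)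
    (x₀ : Rn n) {r : ℝ} (hr : 0 < r) {E : Set (Rn n)} (hE : E ⊆ cube x₀ r) :
    wVol w (cube x₀ r) * (volume E) ^ q ≤
      ENNReal.ofReal C * (volume (cube x₀ r)) ^ q * wVol w E := by
  obtain ⟨hw0, hwpos, hwloc, hAq⟩ := hw
  have hq0 : (0:ℝ) < q := by linarith
  set Q := cube x₀ r with hQ
  set b := volume Q with hb
  have hbval : b = ENNReal.ofReal (r ^ n) := volume_cube x₀ hr.le
  have hb0 : b ≠ 0 := by
    rw [hbval]; simp [ENNReal.ofReal_eq_zero, not_le]; positivity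
  have hbt : b ≠ ∞ := by rw [hbval]; exact ofReal_ne_top
  set S := ∫⁻ x in Q, ENNReal.ofReal (w x ^ (-(1 : ℝ) / (q - 1))) with hS
  set WQ := wVol w Q with hWQ
  set WE := wVol w E with hWE
  have hwmeas : AEMeasurable (fun x => ENNReal.ofReal (w x)) volume :=
    (ENNReal.measurable_ofReal.comp_aemeasurable hwloc.aestronglyMeasurable.aemeasurable)
  -- conjugate exponent
  set q' := Real.conjExponent q with hq'
  have hpq : q.HolderConjugate q' := Real.HolderConjugate.conjExponent hq
  have hq1 : q - 1 ≠ 0 := by linarith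
  have hq2 : q ≠ 0 := by linarith
  have hq'q : q' / q = 1 / (q - 1) := by
    rw [hq', Real.conjExponent]
    field_simp
  have hq'pos : 0 < q' := hpq.symm.pos
  -- Hölder on E
  have hofr : ∀ᵐ x, ENNReal.ofReal (w x ^ (-(1 : ℝ) / (q - 1))) =
      (ENNReal.ofReal (w x)) ^ (-(1/q) * q') := by
    filter_upwards [hwpos] with x hx
    rw [ENNReal.ofReal_rpow_of_pos hx]
    congr 1
    rw [hq', Real.conjExponent]
    field_simp
  have hHolder : volume E ≤ WE ^ (1/q) * S ^ (1/q') := by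
    have h1 : volume E = ∫⁻ _ in E, (1:ℝ≥0∞) := (setLIntegral_one E).symm
    set F := fun x => (ENNReal.ofReal (w x)) ^ (1/q) with hF
    set G := fun x => (ENNReal.ofReal (w x)) ^ (-(1/q)) with hG
    have hae : ∀ᵐ x ∂(volume.restrict E), (1:ℝ≥0∞) = (F * G) x := by
      filter_upwards [ae_restrict_of_ae hwpos] with x hx
      have h0 : ENNReal.ofReal (w x) ≠ 0 := by simp [ENNReal.ofReal_eq_zero, not_le, hx]
      show (1:ℝ≥0∞) = F x * G x
      rw [hF, hG]
      dsimp only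
      rw [← ENNReal.rpow_add _ _ h0 ofReal_ne_top]
      norm_num
    have hFm : AEMeasurable F (volume.restrict E) :=
      ENNReal.continuous_rpow_const.measurable.comp_aemeasurable hwmeas.restrict
    have hGm : AEMeasurable G (volume.restrict E) :=
      ENNReal.continuous_rpow_const.measurable.comp_aemeasurable hwmeas.restrict
    have hH := ENNReal.lintegral_mul_le_Lp_mul_Lq (volume.restrict E) hpq hFm hGm
    have hFq : (∫⁻ x in E, F x ^ q) = WE := by
      rw [hWE, wVol]
      apply lintegral_congr
      intro x
      rw [hF]
      dsimp only
      rw [← ENNReal.rpow_mul, one_div, inv_mul_cancel₀ hq2, ENNReal.rpow_one]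
    have hGq : (∫⁻ x in E, G x ^ q') ≤ S := by
      have heq : (∫⁻ x in E, G x ^ q') =
          ∫⁻ x in E, ENNReal.ofReal (w x ^ (-(1 : ℝ) / (q - 1))) := by
        apply lintegral_congr_ae
        filter_upwards [ae_restrict_of_ae hofr] with x hx
        rw [hx, hG]
        dsimp only
        rw [← ENNReal.rpow_mul]
      rw [heq, hS]
      exact lintegral_mono_set hE
    calc volume E = ∫⁻ x in E, (1:ℝ≥0∞) := h1
      _ = ∫⁻ x in E, (F * G) x := lintegral_congr_ae hae
      _ ≤ (∫⁻ x in E, F x ^ q) ^ (1/q) * (∫⁻ x in E, G x ^ q') ^ (1/q') := hH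
      _ ≤ WE ^ (1/q) * S ^ (1/q') := by
          rw [hFq]
          exact mul_le_mul_right (ENNReal.rpow_le_rpow hGq (by positivity)) _
  -- raise to power q
  have hEq : (volume E) ^ q ≤ WE * S ^ (q - 1) := by
    calc (volume E) ^ q ≤ (WE ^ (1/q) * S ^ (1/q')) ^ q :=
          ENNReal.rpow_le_rpow hHolder hq0.le
      _ = WE * S ^ (q - 1) := by
          rw [ENNReal.mul_rpow_of_nonneg _ _ hq0.le]
          rw [← ENNReal.rpow_mul, ← ENNReal.rpow_mul]
          congr 1
          · rw [one_div, inv_mul_cancel₀ hq2, ENNReal.rpow_one]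
          · congr 1
            rw [hq', Real.conjExponent]
            field_simp
  -- A_q inequality at Q
  have hAQ : WQ * S ^ (q - 1) ≤ ENNReal.ofReal C * b ^ q := by
    have h := hAq x₀ r hr
    rw [← hQ, ← hb, ← hS, ← hWQ] at h
    have hb0' : b⁻¹ ≠ 0 := by simp [hbt]
    have hbt' : b⁻¹ ≠ ∞ := by simp [hb0]
    have hexp : (b⁻¹ * WQ) * (b⁻¹ * S) ^ (q - 1) =
        (WQ * S ^ (q - 1)) * (b ^ q)⁻¹ := by
      rw [ENNReal.mul_rpow_of_nonneg _ _ (by linarith : (0:ℝ) ≤ q - 1)]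
      have : b⁻¹ * (b⁻¹) ^ (q - 1) = (b ^ q)⁻¹ := by
        nth_rewrite 1 [← ENNReal.rpow_one b⁻¹]
        rw [← ENNReal.rpow_add _ _ hb0' hbt', ← ENNReal.inv_rpow]
        congr 1
        linarith
      calc (b⁻¹ * WQ) * ((b⁻¹) ^ (q-1) * S ^ (q - 1))
          = (WQ * S ^ (q - 1)) * (b⁻¹ * (b⁻¹) ^ (q-1)) := by ring
        _ = (WQ * S ^ (q - 1)) * (b ^ q)⁻¹ := by rw [this]
    rw [hexp] at h
    have hbq0 : b ^ q ≠ 0 := by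
      simp only [ne_eq, ENNReal.rpow_eq_zero_iff, not_or]
      constructor
      · rintro ⟨h1, _⟩; exact hb0 h1
      · rintro ⟨h1, _⟩; exact hbt h1
    have hbqt : b ^ q ≠ ∞ := by
      simp only [ne_eq, ENNReal.rpow_eq_top_iff, not_or]
      constructor
      · rintro ⟨h1, _⟩; exact hb0 h1
      · rintro ⟨h1, _⟩; exact hbt h1
    have h2 := mul_le_mul_left h (b ^ q)
    rwa [mul_assoc, ENNReal.inv_mul_cancel hbq0 hbqt, mul_one] at h2
  -- combine
  calc WQ * (volume E) ^ q ≤ WQ * (WE * S ^ (q - 1)) := mul_le_mul_right hEq _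
    _ = (WQ * S ^ (q - 1)) * WE := by ring
    _ ≤ (ENNReal.ofReal C * b ^ q) * WE := mul_le_mul_left hAQ _

lemma wball_doubling (hn : 0 < n) (hq : 1 < q) (hw : IsAqWith w q C) (hC : 0 ≤ C)
    (k : ℕ) (y : Rn n) {t : ℝ} (ht : 0 < t) :
    (∫⁻ x in Metric.ball y ((2:ℝ)^k * t), ENNReal.ofReal (w x)) ≤
      ENNReal.ofReal ((C * ((2:ℝ) * Real.sqrt n) ^ ((n:ℝ) * q)) * (2:ℝ) ^ ((k:ℝ) * n * q)) *
        ∫⁻ x in Metric.ball y t, ENNReal.ofReal (w x) := by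
  have hsn : (1:ℝ) ≤ Real.sqrt n := by
    rw [show (1:ℝ) = Real.sqrt 1 by simp]
    apply Real.sqrt_le_sqrt
    exact_mod_cast hn
  have hsn0 : (0:ℝ) < Real.sqrt n := by linarith
  set R := 2 * ((2:ℝ)^k * t) with hR
  have hRpos : 0 < R := by positivity
  have h2k : (1:ℝ) ≤ (2:ℝ)^k := one_le_pow₀ (by norm_num)
  set s := t / Real.sqrt n with hs
  have hspos : 0 < s := by positivity
  set E := cube y s with hEdef
  have hEball : E ⊆ Metric.ball y t := cube_subset_ball hn y ht
  have hEQ : E ⊆ cube y R := by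
    apply cube_mono
    rw [hs, hR]
    rw [div_le_iff₀ hsn0]
    nlinarith
  have hsub := aq_sub hn hq hw y hRpos hEQ
  have hvolE : volume E = ENNReal.ofReal (s ^ n) := volume_cube y hspos.le
  have hvolQ : volume (cube y R) = ENNReal.ofReal (R ^ n) := volume_cube y hRpos.le
  rw [hvolE, hvolQ] at hsub
  rw [ENNReal.ofReal_rpow_of_pos (by positivity), ENNReal.ofReal_rpow_of_pos (by positivity)]
    at hsub
  set e := (s ^ n : ℝ) ^ q with he
  have hepos : (0:ℝ) < e := by
    rw [he]; positivity
  have hc0 : ENNReal.ofReal e ≠ 0 := by simp [ENNReal.ofReal_eq_zero, not_le, hepos]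
  have hct : ENNReal.ofReal e ≠ ∞ := ofReal_ne_top
  -- divide through
  have hWQ : wVol w (cube y R) ≤
      (ENNReal.ofReal C * ENNReal.ofReal ((R^n:ℝ) ^ q) * wVol w E) / ENNReal.ofReal e :=
    (ENNReal.le_div_iff_mul_le (Or.inl hc0) (Or.inl hct)).mpr hsub
  rw [div_eq_mul_inv, ← ENNReal.ofReal_inv_of_pos hepos] at hWQ
  -- the real constant computation
  have hconst : C * ((R^n:ℝ) ^ q) * e⁻¹ =
      (C * ((2:ℝ) * Real.sqrt n) ^ ((n:ℝ) * q)) * (2:ℝ) ^ ((k:ℝ) * n * q) := by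
    have h1 : ((R^n:ℝ) ^ q) * e⁻¹ = ((R^n : ℝ) / s^n) ^ q := by
      rw [he, ← div_eq_mul_inv, ← Real.div_rpow (by positivity) (by positivity)]
    have h2 : (R^n : ℝ) / s^n = (((2:ℝ) * Real.sqrt n) * (2:ℝ)^k)^n := by
      rw [← div_pow]
      congr 1
      rw [hR, hs]
      field_simp
    have h3 : ((((2:ℝ) * Real.sqrt n) * (2:ℝ)^k)^n : ℝ) ^ q =
        ((2:ℝ) * Real.sqrt n) ^ ((n:ℝ) * q) * (2:ℝ) ^ ((k:ℝ) * n * q) := by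
      rw [← Real.rpow_natCast (((2:ℝ) * Real.sqrt n) * (2:ℝ)^k) n,
        ← Real.rpow_mul (by positivity)]
      rw [Real.mul_rpow (by positivity) (by positivity)]
      congr 1
      rw [← Real.rpow_natCast (2:ℝ) k, ← Real.rpow_mul (by norm_num)]
      congr 1
      ring
    rw [mul_assoc, h1, h2, h3]
    ring
  calc (∫⁻ x in Metric.ball y ((2:ℝ)^k * t), ENNReal.ofReal (w x))
      ≤ wVol w (cube y R) := by
        apply lintegral_mono_set
        rw [hR]
        exact ball_subset_cube y _
    _ ≤ (ENNReal.ofReal C * ENNReal.ofReal ((R^n:ℝ) ^ q) * wVol w E) * ENNReal.ofReal e⁻¹ := hWQ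
    _ = ENNReal.ofReal (C * ((R^n:ℝ) ^ q) * e⁻¹) * wVol w E := by
        rw [ENNReal.ofReal_mul (mul_nonneg hC (Real.rpow_nonneg (by positivity) q)),
          ENNReal.ofReal_mul hC]
        ring
    _ ≤ ENNReal.ofReal ((C * ((2:ℝ) * Real.sqrt n) ^ ((n:ℝ) * q)) * (2:ℝ) ^ ((k:ℝ) * n * q)) *
        ∫⁻ x in Metric.ball y t, ENNReal.ofReal (w x) := by
        rw [hconst]
        exact mul_le_mul_right (lintegral_mono_set hEball) _

lemma swap_eq {n : ℕ} (A : Rn n × ℝ → ℝ≥0∞) (hA : Measurable A)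
    (W : Rn n → ℝ≥0∞) (hW : Measurable W) (hWfin : ∀ x, W x ≠ ∞) (β : ℝ) :
    ∫⁻ x, (∫⁻ t in Set.Ioi (0:ℝ),
        (∫⁻ y in Metric.ball x (β * t), A (y,t) ^ 2) * (ENNReal.ofReal (t ^ (n+1)))⁻¹) * W x
      = ∫⁻ t in Set.Ioi (0:ℝ),
        (∫⁻ y, A (y,t) ^ 2 * ∫⁻ x in Metric.ball y (β * t), W x) *
          (ENNReal.ofReal (t ^ (n+1)))⁻¹ := by
  -- notation
  set c : ℝ → ℝ≥0∞ := fun t => (ENNReal.ofReal (t ^ (n+1)))⁻¹ with hc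
  have hcm : Measurable c := (ENNReal.measurable_ofReal.comp ((measurable_id).pow_const _)).inv
  -- measurability of the inner ball integral as a function of (x, t)
  have hP1 : Measurable (fun p : Rn n × ℝ => ∫⁻ y in Metric.ball p.1 (β * p.2), A (y, p.2) ^ 2) := by
    have hset : MeasurableSet {q : (Rn n × ℝ) × Rn n | dist q.2 q.1.1 < β * q.1.2} := by
      apply measurableSet_lt
      · exact (measurable_snd.dist (measurable_fst.comp measurable_fst))
      · exact (measurable_const.mul (measurable_snd.comp measurable_fst))
    have hind : Measurable (fun q : (Rn n × ℝ) × Rn n =>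
        Set.indicator {q : (Rn n × ℝ) × Rn n | dist q.2 q.1.1 < β * q.1.2}
          (fun q => A (q.2, q.1.2) ^ 2) q) := by
      apply Measurable.indicator _ hset
      exact ((hA.comp (measurable_snd.prodMk (measurable_snd.comp measurable_fst))).pow_const 2)
    have hmeas := Measurable.lintegral_prod_right' (ν := volume) hind
    have heq : (fun p : Rn n × ℝ => ∫⁻ y in Metric.ball p.1 (β * p.2), A (y, p.2) ^ 2)
        = fun p : Rn n × ℝ => ∫⁻ y, Set.indicator {q : (Rn n × ℝ) × Rn n |
            dist q.2 q.1.1 < β * q.1.2} (fun q => A (q.2, q.1.2) ^ 2) (p, y) := by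
      funext p
      rw [← lintegral_indicator measurableSet_ball]
      apply lintegral_congr
      intro y
      by_cases h : dist y p.1 < β * p.2 <;>
        simp [Set.indicator_apply, Metric.mem_ball, h]
    rw [heq]
    exact hmeas
  -- first swap: x and t
  have hG : AEMeasurable (fun p : Rn n × ℝ =>
      (∫⁻ y in Metric.ball p.1 (β * p.2), A (y, p.2) ^ 2) * c p.2 * W p.1)
      (volume.prod (volume.restrict (Set.Ioi (0:ℝ)))) :=
    ((hP1.mul (hcm.comp measurable_snd)).mul (hW.comp measurable_fst)).aemeasurable
  calc ∫⁻ x, (∫⁻ t in Set.Ioi (0:ℝ),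
        (∫⁻ y in Metric.ball x (β * t), A (y,t) ^ 2) * c t) * W x
      = ∫⁻ x, ∫⁻ t in Set.Ioi (0:ℝ),
          (∫⁻ y in Metric.ball x (β * t), A (y,t) ^ 2) * c t * W x := by
        apply lintegral_congr
        intro x
        exact (lintegral_mul_const' (W x) _ (hWfin x)).symm
    _ = ∫⁻ t in Set.Ioi (0:ℝ), ∫⁻ x,
          (∫⁻ y in Metric.ball x (β * t), A (y,t) ^ 2) * c t * W x :=
        lintegral_lintegral_swap hG
    _ = ∫⁻ t in Set.Ioi (0:ℝ),
        (∫⁻ y, A (y,t) ^ 2 * ∫⁻ x in Metric.ball y (β * t), W x) * c t := by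
        apply setLIntegral_congr_fun measurableSet_Ioi
        intro t ht
        have ht' : (0:ℝ) < t := ht
        have hct : c t ≠ ∞ := by
          rw [hc]
          simp only [ne_eq, ENNReal.inv_eq_top, ENNReal.ofReal_eq_zero, not_le]
          positivity
        -- second swap: x and y at fixed t
        have hset2 : MeasurableSet {p : Rn n × Rn n | dist p.2 p.1 < β * t} :=
          measurableSet_lt (measurable_snd.dist measurable_fst) measurable_const
        have hG2 : AEMeasurable (fun p : Rn n × Rn n =>
            Set.indicator {p : Rn n × Rn n | dist p.2 p.1 < β * t}
              (fun p => A (p.2, t) ^ 2) p * (c t * W p.1))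
            (volume.prod volume) := by
          apply Measurable.aemeasurable
          apply Measurable.mul
          · exact Measurable.indicator
              ((hA.comp (measurable_snd.prodMk measurable_const)).pow_const 2) hset2
          · exact measurable_const.mul (hW.comp measurable_fst)
        calc ∫⁻ x, (∫⁻ y in Metric.ball x (β * t), A (y,t) ^ 2) * c t * W x
            = ∫⁻ x, ∫⁻ y, Set.indicator {p : Rn n × Rn n | dist p.2 p.1 < β * t}
                (fun p => A (p.2, t) ^ 2) (x, y) * (c t * W x) := by
              apply lintegral_congr
              intro x
              rw [mul_assoc, ← lintegral_indicator measurableSet_ball,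
                ← lintegral_mul_const' (c t * W x) _
                  (ENNReal.mul_ne_top hct (hWfin x))]
              apply lintegral_congr
              intro y
              by_cases h : dist y x < β * t <;>
                simp [Set.indicator_apply, Metric.mem_ball, h]
          _ = ∫⁻ y, ∫⁻ x, Set.indicator {p : Rn n × Rn n | dist p.2 p.1 < β * t}
                (fun p => A (p.2, t) ^ 2) (x, y) * (c t * W x) :=
              lintegral_lintegral_swap hG2
          _ = (∫⁻ y, A (y,t) ^ 2 * ∫⁻ x in Metric.ball y (β * t), W x) * c t := by
              rw [← lintegral_mul_const' (c t) _ hct]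
              apply lintegral_congr
              intro y
              have hrw : ∀ x : Rn n, Set.indicator {p : Rn n × Rn n | dist p.2 p.1 < β * t}
                  (fun p => A (p.2, t) ^ 2) (x, y) * (c t * W x)
                  = Set.indicator (Metric.ball y (β * t))
                      (fun x => A (y, t) ^ 2 * c t * W x) x := by
                intro x
                simp only [Set.indicator_apply, Set.mem_setOf_eq, Metric.mem_ball]
                rw [dist_comm]
                by_cases hxy : dist x y < β * t
                · simp [hxy, mul_assoc]
                · simp [hxy]
              calc ∫⁻ x, Set.indicator {p : Rn n × Rn n | dist p.2 p.1 < β * t}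
                    (fun p => A (p.2, t) ^ 2) (x, y) * (c t * W x)
                  = ∫⁻ x, Set.indicator (Metric.ball y (β * t))
                      (fun x => A (y, t) ^ 2 * c t * W x) x := lintegral_congr hrw
                _ = ∫⁻ x in Metric.ball y (β * t), A (y, t) ^ 2 * c t * W x :=
                    lintegral_indicator measurableSet_ball _
                _ = A (y,t) ^ 2 * c t * ∫⁻ x in Metric.ball y (β * t), W x :=
                    lintegral_const_mul _ hW
                _ = A (y,t) ^ 2 * (∫⁻ x in Metric.ball y (β * t), W x) * c t := by ring

end Aux2

/-- Let `0 < α ≤ 1`, `q > 1` and `w ∈ A_q`. Then there exists a constant `C > 0`,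
independent of `k` and `f`, such that for every locally integrable function `f` and every
integer `k ≥ 1`, `‖S_{α,2ᵏ}(f)‖_{L²_w} ≤ C · 2^{knq/2} · ‖S_α(f)‖_{L²_w}`. -/
theorem varying_aperture_square_function_L2_bound
    {n : ℕ} (hn : 0 < n) (α q : ℝ) (hα0 : 0 < α) (hα1 : α ≤ 1) (hq : 1 < q)
    (w : Rn n → ℝ) (hw : IsAq w q) :
    ∃ C : ℝ, 0 < C ∧ ∀ f : Rn n → ℝ, LocallyIntegrable f volume →
      ∀ k : ℕ, 1 ≤ k →
      lpwNorm w 2 (sSF n ((2 : ℝ) ^ k) (intrAf α f)) ≤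
        ENNReal.ofReal (C * (2 : ℝ) ^ ((k : ℝ) * n * q / 2)) *
          lpwNorm w 2 (sSF n 1 (intrAf α f)) := by
  obtain ⟨C₀, hC₀pos, hwAq⟩ := hw
  set K := C₀ * ((2:ℝ) * Real.sqrt n) ^ ((n:ℝ) * q) with hKdef
  have hKpos : 0 < K := by
    apply mul_pos hC₀pos
    apply Real.rpow_pos_of_pos
    have : (0:ℝ) < Real.sqrt n := Real.sqrt_pos.mpr (by exact_mod_cast hn)
    positivity
  refine ⟨K ^ ((1:ℝ)/2), Real.rpow_pos_of_pos hKpos _, ?_⟩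
  intro f hf k hk
  -- measurable representative of w
  have hwa := hwAq.2.2.1.aestronglyMeasurable
  set w' := hwa.mk w with hw'def
  have hw'm : Measurable w' := hwa.stronglyMeasurable_mk.measurable
  have hae : w =ᵐ[volume] w' := hwa.ae_eq_mk
  set Wt : Rn n → ℝ≥0∞ := fun x => ENNReal.ofReal (w' x) with hWt
  have hWtm : Measurable Wt := ENNReal.measurable_ofReal.comp hw'm
  have hWtfin : ∀ x, Wt x ≠ ∞ := fun x => ofReal_ne_top
  set A : Rn n × ℝ → ℝ≥0∞ := fun p => intrAf α f p.1 p.2 with hA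
  have hAm : Measurable A := intrAf_measurable hn hα0 hα1 hf
  have hWB : ∀ (y : Rn n) (r : ℝ), (∫⁻ x in Metric.ball y r, Wt x)
      = ∫⁻ x in Metric.ball y r, ENNReal.ofReal (w x) := by
    intro y r
    apply lintegral_congr_ae
    filter_upwards [ae_restrict_of_ae hae] with x hx
    rw [hWt]
    dsimp only
    rw [hx]
  -- rewrite the weighted L² norms
  have hsq : ∀ X : ℝ≥0∞, (X ^ ((1:ℝ)/(2:ℝ))) ^ (2:ℝ) = X := by
    intro X
    rw [← ENNReal.rpow_mul]
    norm_num
  have hlp : ∀ β : ℝ, lpwNorm w 2 (sSF n β (intrAf α f)) =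
      (∫⁻ x, (∫⁻ t in Set.Ioi (0:ℝ),
          (∫⁻ y in Metric.ball x (β * t), A (y,t) ^ 2) * (ENNReal.ofReal (t ^ (n+1)))⁻¹)
        * Wt x) ^ (1/(2:ℝ)) := by
    intro β
    rw [lpwNorm]
    congr 1
    apply lintegral_congr_ae
    filter_upwards [hae] with x hx
    rw [hx, sSF, hsq]
  rw [hlp ((2:ℝ)^k), hlp 1]
  rw [swap_eq A hAm Wt hWtm hWtfin ((2:ℝ)^k), swap_eq A hAm Wt hWtm hWtfin 1]
  set D := ENNReal.ofReal (K * (2:ℝ) ^ ((k:ℝ) * n * q)) with hDdef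
  set Y := ∫⁻ t in Set.Ioi (0:ℝ),
      (∫⁻ y, A (y,t) ^ 2 * ∫⁻ x in Metric.ball y (1 * t), Wt x) *
        (ENNReal.ofReal (t ^ (n+1)))⁻¹ with hY
  have hkey : (∫⁻ t in Set.Ioi (0:ℝ),
      (∫⁻ y, A (y,t) ^ 2 * ∫⁻ x in Metric.ball y ((2:ℝ)^k * t), Wt x) *
        (ENNReal.ofReal (t ^ (n+1)))⁻¹) ≤ D * Y := by
    rw [hY, ← lintegral_const_mul' D _ ofReal_ne_top]
    apply lintegral_mono_ae
    filter_upwards [self_mem_ae_restrict measurableSet_Ioi] with t ht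
    have ht' : (0:ℝ) < t := ht
    have hdbl : ∀ y : Rn n, (∫⁻ x in Metric.ball y ((2:ℝ)^k * t), Wt x)
        ≤ D * ∫⁻ x in Metric.ball y (1 * t), Wt x := by
      intro y
      rw [hWB, hWB, one_mul, hDdef, hKdef]
      exact wball_doubling hn hq hwAq hC₀pos.le k y ht'
    calc (∫⁻ y, A (y,t) ^ 2 * ∫⁻ x in Metric.ball y ((2:ℝ)^k * t), Wt x) *
          (ENNReal.ofReal (t ^ (n+1)))⁻¹
        ≤ (∫⁻ y, D * (A (y,t) ^ 2 * ∫⁻ x in Metric.ball y (1 * t), Wt x)) *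
          (ENNReal.ofReal (t ^ (n+1)))⁻¹ := by
          apply mul_le_mul_left
          apply lintegral_mono
          intro y
          calc A (y,t) ^ 2 * ∫⁻ x in Metric.ball y ((2:ℝ)^k * t), Wt x
              ≤ A (y,t) ^ 2 * (D * ∫⁻ x in Metric.ball y (1 * t), Wt x) :=
                mul_le_mul_right (hdbl y) _
            _ = D * (A (y,t) ^ 2 * ∫⁻ x in Metric.ball y (1 * t), Wt x) := by ring
      _ = D * ((∫⁻ y, A (y,t) ^ 2 * ∫⁻ x in Metric.ball y (1 * t), Wt x) *
          (ENNReal.ofReal (t ^ (n+1)))⁻¹) := by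
          rw [lintegral_const_mul' D _ ofReal_ne_top, mul_assoc]
  calc (∫⁻ t in Set.Ioi (0:ℝ),
      (∫⁻ y, A (y,t) ^ 2 * ∫⁻ x in Metric.ball y ((2:ℝ)^k * t), Wt x) *
        (ENNReal.ofReal (t ^ (n+1)))⁻¹) ^ (1/(2:ℝ))
      ≤ (D * Y) ^ (1/(2:ℝ)) := ENNReal.rpow_le_rpow hkey (by norm_num)
    _ = D ^ (1/(2:ℝ)) * Y ^ (1/(2:ℝ)) := ENNReal.mul_rpow_of_nonneg _ _ (by norm_num)
    _ = ENNReal.ofReal (K ^ ((1:ℝ)/2) * (2 : ℝ) ^ ((k : ℝ) * n * q / 2)) * Y ^ (1/(2:ℝ)) := by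
        congr 1
        rw [hDdef]
        rw [ENNReal.ofReal_rpow_of_pos (by positivity)]
        congr 1
        rw [Real.mul_rpow hKpos.le (by positivity)]
        congr 1
        rw [← Real.rpow_mul (by norm_num : (0:ℝ) ≤ 2)]
        congr 1
        ring

end
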